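/- Every metric space satisfying the Ptolemy inequality has Enflo type 2 with constant √3: for every N and points (x_ε) indexed by ε ∈ {−1,1}^N, Σ_ε d(x_ε, x_{−ε})² ≤ 3 Σ_{ε∼ε'} d(x_ε, x_{ε'})². -/
import Mathlib


open Finset


def consE (N : ℕ) : Bool × (Fin N → Bool) ≃ (Fin (N+1) → Bool) where
  toFun p := Fin.cons p.1 p.2
  invFun q := (q 0, Fin.tail q)
  left_inv p := by simp [Fin.tail_cons]
  right_inv q := Fin.cons_self_tail q

lemma cube_sum_split {N : ℕ} (f : (Fin (N+1) → Bool) → ℝ) :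
    ∑ ε : Fin (N+1) → Bool, f ε = ∑ b : Bool, ∑ ε : Fin N → Bool, f (Fin.cons b ε) := by
  rw [show (∑ b : Bool, ∑ ε : Fin N → Bool, f (Fin.cons b ε))
      = ∑ p : Bool × (Fin N → Bool), f (Fin.cons p.1 p.2) from (Fintype.sum_prod_type (fun p : Bool × (Fin N → Bool) => f (Fin.cons p.1 p.2))).symm]
  exact (Fintype.sum_equiv (consE N) _ f (fun p => rfl)).symm

lemma neg_sum {N : ℕ} (g : (Fin N → Bool) → ℝ) :
    ∑ ε : Fin N → Bool, g (fun i => !(ε i)) = ∑ ε : Fin N → Bool, g ε :=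
  Fintype.sum_bijective (fun ε => fun i => !(ε i))
    (Function.Involutive.bijective (by intro ε; funext i; simp)) _ _ (fun ε => rfl)

lemma four {X : Type*} [MetricSpace X]
    (hpt : ∀ w x y z : X,
      dist w y * dist x z ≤ dist w x * dist y z + dist w z * dist y x)
    (w x y z : X) :
    dist w y ^ 2 + dist x z ^ 2 ≤
      dist w x ^ 2 + dist y z ^ 2 + 3 * (dist x y ^ 2 + dist z w ^ 2) := by
  have h1 := hpt w x y z
  have h2 : dist w y ≤ dist z w + dist x z + dist x y := by
    calc dist w y ≤ dist w z + dist z y := dist_triangle _ _ _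
    _ ≤ dist w z + (dist z x + dist x y) := by gcongr; exact dist_triangle _ _ _
    _ = dist z w + dist x z + dist x y := by rw [dist_comm w z, dist_comm z x]; ring
  have h3 : dist x z ≤ dist x y + dist w y + dist z w := by
    calc dist x z ≤ dist x y + dist y z := dist_triangle _ _ _
    _ ≤ dist x y + (dist y w + dist w z) := by gcongr; exact dist_triangle _ _ _
    _ = dist x y + dist w y + dist z w := by rw [dist_comm y w, dist_comm w z]; ring
  rw [dist_comm y x, dist_comm w z] at h1
  nlinarith [sq_nonneg (dist w x - dist y z), sq_nonneg (dist x y - dist z w), h1,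
    mul_nonneg (by linarith : (0:ℝ) ≤ dist x y + dist z w + dist x z - dist w y)
      (by linarith : (0:ℝ) ≤ dist x y + dist z w + dist w y - dist x z)]

lemma key {X : Type*} [MetricSpace X]
    (hpt : ∀ w x y z : X,
      dist w y * dist x z ≤ dist w x * dist y z + dist w z * dist y x) :
    ∀ (N : ℕ) (x : (Fin N → Bool) → X),
    ∑ ε : Fin N → Bool, dist (x ε) (x (fun i => !(ε i))) ^ 2 ≤
      3 * ∑ ε : Fin N → Bool, ∑ i : Fin N,
        dist (x ε) (x (Function.update ε i (!(ε i)))) ^ 2 := by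
  intro N
  induction N with
  | zero =>
    intro x
    have h : ∀ ε : Fin 0 → Bool, (fun i => !(ε i)) = ε := fun ε => funext fun i => i.elim0
    simp [h]
  | succ N ih =>
    intro x
    have hneg : ∀ (b : Bool) (ε : Fin N → Bool),
        (fun i => !((Fin.cons b ε : Fin (N+1) → Bool) i)) = Fin.cons (!b) (fun i => !(ε i)) := by
      intro b ε; funext i
      refine Fin.cases ?_ ?_ i <;> simp
    have hupd0 : ∀ (b : Bool) (ε : Fin N → Bool),
        Function.update (Fin.cons b ε : Fin (N+1) → Bool) 0 (!((Fin.cons b ε : Fin (N+1) → Bool) 0)) = Fin.cons (!b) ε := by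
      intro b ε; rw [Fin.cons_zero, Fin.update_cons_zero]
    have hupds : ∀ (b : Bool) (ε : Fin N → Bool) (j : Fin N),
        Function.update (Fin.cons b ε : Fin (N+1) → Bool) j.succ (!((Fin.cons b ε : Fin (N+1) → Bool) j.succ)) =
          Fin.cons b (Function.update ε j (!(ε j))) := by
      intro b ε j; rw [Fin.cons_succ, Fin.cons_update]
    rw [cube_sum_split, cube_sum_split, Fintype.sum_bool, Fintype.sum_bool]
    simp only [hneg]
    -- Rewrite the inner Fin (N+1) sums
    have hrhs : ∀ b : Bool, ∀ ε : Fin N → Bool,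
        (∑ i : Fin (N+1), dist (x (Fin.cons b ε))
            (x (Function.update (Fin.cons b ε : Fin (N+1) → Bool) i (!((Fin.cons b ε : Fin (N+1) → Bool) i)))) ^ 2)
        = dist (x (Fin.cons b ε)) (x (Fin.cons (!b) ε)) ^ 2
          + ∑ j : Fin N, dist (x (Fin.cons b ε))
              (x (Fin.cons b (Function.update ε j (!(ε j))))) ^ 2 := by
      intro b ε
      rw [Fin.sum_univ_succ, hupd0]
      congr 1
      exact Finset.sum_congr rfl fun j _ => by rw [hupds]
    simp only [hrhs]
    rw [Finset.sum_add_distrib, Finset.sum_add_distrib]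
    -- abbreviations
    have h4 : ∀ ε : Fin N → Bool,
        dist (x (Fin.cons true ε)) (x (Fin.cons false (fun i => !(ε i)))) ^ 2
        + dist (x (Fin.cons false ε)) (x (Fin.cons true (fun i => !(ε i)))) ^ 2
        ≤ dist (x (Fin.cons false ε)) (x (Fin.cons false (fun i => !(ε i)))) ^ 2
          + dist (x (Fin.cons true ε)) (x (Fin.cons true (fun i => !(ε i)))) ^ 2
          + 3 * (dist (x (Fin.cons false (fun i => !(ε i)))) (x (Fin.cons true (fun i => !(ε i)))) ^ 2
            + dist (x (Fin.cons false ε)) (x (Fin.cons true ε)) ^ 2) := by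
      intro ε
      have := four hpt (x (Fin.cons false ε)) (x (Fin.cons false (fun i => !(ε i))))
        (x (Fin.cons true (fun i => !(ε i)))) (x (Fin.cons true ε))
      rw [dist_comm (x (Fin.cons true (fun i => !(ε i)))) (x (Fin.cons true ε)),
        dist_comm (x (Fin.cons true ε)) (x (Fin.cons false ε))] at this
      rw [dist_comm (x (Fin.cons true ε)) (x (Fin.cons false (fun i => !(ε i))))]
      linarith
    have hsum4 := Finset.sum_le_sum (fun ε (_ : ε ∈ (univ : Finset (Fin N → Bool))) => h4 ε)
    rw [Finset.sum_add_distrib, Finset.sum_add_distrib] at hsum4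
    have ihf := ih (fun ε => x (Fin.cons false ε))
    have iht := ih (fun ε => x (Fin.cons true ε))
    have hnegV : ∑ ε : Fin N → Bool,
        (dist (x (Fin.cons false (fun i => !(ε i)))) (x (Fin.cons true (fun i => !(ε i)))) ^ 2
          + dist (x (Fin.cons false ε)) (x (Fin.cons true ε)) ^ 2)
        = 2 * ∑ ε : Fin N → Bool, dist (x (Fin.cons false ε)) (x (Fin.cons true ε)) ^ 2 := by
      rw [Finset.sum_add_distrib,
        neg_sum (fun ε => dist (x (Fin.cons false ε)) (x (Fin.cons true ε)) ^ 2)]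
      ring
    have hVtrue : ∑ ε : Fin N → Bool, dist (x (Fin.cons true ε)) (x (Fin.cons false ε)) ^ 2
        = ∑ ε : Fin N → Bool, dist (x (Fin.cons false ε)) (x (Fin.cons true ε)) ^ 2 :=
      Finset.sum_congr rfl fun ε _ => by rw [dist_comm]
    have hA : ∑ ε : Fin N → Bool,
        (dist (x (Fin.cons false ε)) (x (Fin.cons false (fun i => !(ε i)))) ^ 2
          + dist (x (Fin.cons true ε)) (x (Fin.cons true (fun i => !(ε i)))) ^ 2)
        = (∑ ε : Fin N → Bool, dist (x (Fin.cons false ε)) (x (Fin.cons false (fun i => !(ε i)))) ^ 2)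
          + ∑ ε : Fin N → Bool, dist (x (Fin.cons true ε)) (x (Fin.cons true (fun i => !(ε i)))) ^ 2 :=
      Finset.sum_add_distrib
    have hB : ∑ ε : Fin N → Bool,
        3 * (dist (x (Fin.cons false (fun i => !(ε i)))) (x (Fin.cons true (fun i => !(ε i)))) ^ 2
          + dist (x (Fin.cons false ε)) (x (Fin.cons true ε)) ^ 2)
        = 3 * (2 * ∑ ε : Fin N → Bool, dist (x (Fin.cons false ε)) (x (Fin.cons true ε)) ^ 2) := by
      rw [← Finset.mul_sum, hnegV]
    rw [hA, hB] at hsum4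
    simp only [Bool.not_true, Bool.not_false] at *
    linarith [hsum4, ihf, iht, hVtrue]

/-- Two vertices of the discrete cube `{−1,1}^N` (modelled as `Fin N → Bool`) are adjacent
if they differ in exactly one coordinate. -/
def Adjacent {N : ℕ} (ε ε' : Fin N → Bool) : Prop :=
  (Finset.univ.filter fun i => ε i ≠ ε' i).card = 1

instance {N : ℕ} (ε ε' : Fin N → Bool) : Decidable (Adjacent ε ε') := by
  unfold Adjacent; infer_instance

lemma adj_sum {N : ℕ} (ε : Fin N → Bool) (f : (Fin N → Bool) → ℝ) :
    ∑ ε' : Fin N → Bool, (if Adjacent ε ε' then f ε' else 0)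
      = ∑ i : Fin N, f (Function.update ε i (!(ε i))) := by
  rw [← Finset.sum_filter]
  have hinj : ∀ i ∈ (univ : Finset (Fin N)), ∀ j ∈ (univ : Finset (Fin N)),
      Function.update ε i (!(ε i)) = Function.update ε j (!(ε j)) → i = j := by
    intro i _ j _ h
    by_contra hne
    have h2 := congrFun h i
    rw [Function.update_self, Function.update_of_ne hne] at h2
    simp at h2
  have himg : filter (fun ε' => Adjacent ε ε') univ
      = Finset.image (fun i => Function.update ε i (!(ε i))) univ := by
    ext ε'
    simp only [mem_filter, mem_univ, true_and, Finset.mem_image]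
    constructor
    · intro hA
      unfold Adjacent at hA
      obtain ⟨j, hj⟩ := Finset.card_eq_one.mp hA
      refine ⟨j, ?_⟩
      have hjmem : ε j ≠ ε' j := by
        have : j ∈ filter (fun i => ε i ≠ ε' i) univ := by
          rw [hj]; exact mem_singleton_self j
        simpa using this
      funext k
      by_cases hk : k = j
      · subst hk
        rw [Function.update_self]
        revert hjmem; cases ε k <;> cases ε' k <;> simp
      · rw [Function.update_of_ne hk]
        have : k ∉ filter (fun i => ε i ≠ ε' i) univ := by
          rw [hj]; simpa using hk
        simpa using this
    · rintro ⟨i, rfl⟩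
      show (filter (fun k => ε k ≠ Function.update ε i (!(ε i)) k) univ).card = 1
      have heq : filter (fun k => ε k ≠ Function.update ε i (!(ε i)) k) univ = {i} := by
        ext k
        simp only [mem_filter, mem_univ, true_and, mem_singleton, Function.update_apply]
        by_cases hk : k = i
        · subst hk; simp
        · simp [hk]
      rw [heq, Finset.card_singleton]
  rw [himg, Finset.sum_image hinj]

/-- Every Ptolemaic metric space has Enflo type 2 with constant `√3`. -/
theorem stmt12 {X : Type*} [MetricSpace X]
    (hpt : ∀ w x y z : X,
      dist w y * dist x z ≤ dist w x * dist y z + dist w z * dist y x)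
    (N : ℕ) (x : (Fin N → Bool) → X) :
    ∑ ε : Fin N → Bool, dist (x ε) (x (fun i => !(ε i))) ^ 2 ≤
      3 * ∑ ε : Fin N → Bool, ∑ ε' : Fin N → Bool,
        if Adjacent ε ε' then dist (x ε) (x ε') ^ 2 else 0 := by
  refine le_trans (key hpt N x) (le_of_eq ?_)
  congr 1
  exact Finset.sum_congr rfl fun ε _ =>
    (adj_sum ε (fun ε' => dist (x ε) (x ε') ^ 2)).symm
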